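/- Let n ≥ 1, l, r̃ ∈ ℝ, σ ∈ ℝ, K > 0 and ε ∈ [0,1]. Set f_ε(s) = (1+εs)^{−K/2} for s ≥ 0, and for (τ_b,μ_b) ≠ 0 set r_ε(τ_b,μ_b) = r̃ − (K/2)·ε(τ_b²+|μ_b|²)/(1+ε(τ_b²+|μ_b|²)). With p(x,τ_b,μ_b) = x²(τ_b²+|μ_b|²) − 2σxτ_b and a(x,τ_b,μ_b) = x^{−2l−1}(τ_b²+|μ_b|²)^{r̃−1/2}, the b-Poisson bracket of p with the regularized symbol a·f_ε(τ_b²+|μ_b|²) satisfies, at every point with (τ_b,μ_b) ≠ 0: {p, a·f_ε(τ_b²+|μ_b|²)} = f_ε(τ_b²+|μ_b|²)·x^{−2l}(τ_b²+|μ_b|²)^{r̃−3/2}·( 4σ((l+r_ε)τ_b² + (l+1/2)|μ_b|²) − 4x(l+r_ε)τ_b(τ_b²+|μ_b|²) ), i.e. the effect of the regularizer is an overall factor f_ε and the replacement of r̃ (except in the exponent) by r_ε. -/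
import Mathlib


/-- The b-Poisson bracket on the b-phase space `(x, τ_b, μ_b) ∈ (0,∞) × ℝ × ℝ^{n-1}`, for
symbols independent of the boundary variables `y`:
`{f, g} = (∂_{τ_b} f)(x ∂ₓ g) − (x ∂ₓ f)(∂_{τ_b} g)`. -/
noncomputable def bBracket {m : ℕ} (f g : ℝ → ℝ → EuclideanSpace ℝ (Fin m) → ℝ)
    (x τ : ℝ) (μ : EuclideanSpace ℝ (Fin m)) : ℝ :=
  deriv (fun t => f x t μ) τ * (x * deriv (fun s => g s τ μ) x)
    - (x * deriv (fun s => f s τ μ) x) * deriv (fun t => g x t μ) τ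

/-- The regularized commutator computation (Lemma 4.2 together with the regularizer of
Remark 4.2): with `p = x²(τ_b²+|μ_b|²) − 2σxτ_b`, `a = x^{−2l−1}(τ_b²+|μ_b|²)^{r̃−1/2}`,
`f_ε(s) = (1+εs)^{−K/2}` and
`r_ε = r̃ − (K/2)·ε(τ_b²+|μ_b|²)/(1+ε(τ_b²+|μ_b|²))`, at every point with `(τ_b,μ_b) ≠ 0`,
`{p, a f_ε(τ_b²+|μ_b|²)} = f_ε(τ_b²+|μ_b|²) x^{−2l}(τ_b²+|μ_b|²)^{r̃−3/2}
   (4σ((l+r_ε)τ_b² + (l+1/2)|μ_b|²) − 4x(l+r_ε)τ_b(τ_b²+|μ_b|²))`. -/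
theorem commutator_symbol_regularized (n : ℕ) (hn : 1 ≤ n) (l r σ K ε : ℝ)
    (hK : 0 < K) (hε : ε ∈ Set.Icc (0 : ℝ) 1)
    (x τb : ℝ) (hx : 0 < x) (μb : EuclideanSpace ℝ (Fin (n - 1)))
    (hne : (τb, μb) ≠ 0) :
    bBracket
        (fun x τ μ => x ^ 2 * (τ ^ 2 + ‖μ‖ ^ 2) - 2 * σ * x * τ)
        (fun x τ μ => x ^ (-2 * l - 1) * (τ ^ 2 + ‖μ‖ ^ 2) ^ (r - 1 / 2) *
          (1 + ε * (τ ^ 2 + ‖μ‖ ^ 2)) ^ (-K / 2))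
        x τb μb
      = (1 + ε * (τb ^ 2 + ‖μb‖ ^ 2)) ^ (-K / 2) *
          (x ^ (-2 * l) * (τb ^ 2 + ‖μb‖ ^ 2) ^ (r - 3 / 2) *
            (4 * σ * ((l + (r - K / 2 * (ε * (τb ^ 2 + ‖μb‖ ^ 2) /
                  (1 + ε * (τb ^ 2 + ‖μb‖ ^ 2))))) * τb ^ 2
                + (l + 1 / 2) * ‖μb‖ ^ 2)
              - 4 * x * (l + (r - K / 2 * (ε * (τb ^ 2 + ‖μb‖ ^ 2) /
                  (1 + ε * (τb ^ 2 + ‖μb‖ ^ 2))))) * τb * (τb ^ 2 + ‖μb‖ ^ 2))) := by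
  have hq : 0 < τb ^ 2 + ‖μb‖ ^ 2 := by
    rcases eq_or_ne τb 0 with h | h
    · have hm : μb ≠ 0 := fun hm => hne (by simp [h, hm, Prod.ext_iff])
      have : 0 < ‖μb‖ := norm_pos_iff.mpr hm
      positivity
    · positivity
  have h1 : 0 < 1 + ε * (τb ^ 2 + ‖μb‖ ^ 2) := by nlinarith [hε.1]
  -- derivative of p in τ
  have hu : HasDerivAt (fun t : ℝ => t ^ 2 + ‖μb‖ ^ 2) (2 * τb) τb := by
    simpa using (hasDerivAt_pow 2 τb).add_const (‖μb‖ ^ 2)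
  have hd1 : deriv (fun t : ℝ => x ^ 2 * (t ^ 2 + ‖μb‖ ^ 2) - 2 * σ * x * t) τb
      = x ^ 2 * (2 * τb) - 2 * σ * x := by
    have : HasDerivAt (fun t : ℝ => x ^ 2 * (t ^ 2 + ‖μb‖ ^ 2) - 2 * σ * x * t)
        (x ^ 2 * (2 * τb) - 2 * σ * x * 1) τb :=
      (hu.const_mul (x ^ 2)).sub ((hasDerivAt_id τb).const_mul (2 * σ * x))
    simpa using this.deriv
  have hd2 : deriv (fun s : ℝ => s ^ 2 * (τb ^ 2 + ‖μb‖ ^ 2) - 2 * σ * s * τb) x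
      = 2 * x * (τb ^ 2 + ‖μb‖ ^ 2) - 2 * σ * τb := by
    have : HasDerivAt (fun s : ℝ => s ^ 2 * (τb ^ 2 + ‖μb‖ ^ 2) - 2 * σ * s * τb)
        (2 * x ^ 1 * (τb ^ 2 + ‖μb‖ ^ 2) - 2 * σ * 1 * τb) x := by
      exact ((hasDerivAt_pow 2 x).mul_const _).sub
        (((hasDerivAt_id x).const_mul (2 * σ)).mul_const τb)
    simpa using this.deriv
  have hd3 : deriv (fun s : ℝ => s ^ (-2 * l - 1) * (τb ^ 2 + ‖μb‖ ^ 2) ^ (r - 1 / 2) *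
        (1 + ε * (τb ^ 2 + ‖μb‖ ^ 2)) ^ (-K / 2)) x
      = (-2 * l - 1) * x ^ (-2 * l - 2) * (τb ^ 2 + ‖μb‖ ^ 2) ^ (r - 1 / 2) *
        (1 + ε * (τb ^ 2 + ‖μb‖ ^ 2)) ^ (-K / 2) := by
    have hr : HasDerivAt (fun s : ℝ => s ^ (-2 * l - 1))
        ((-2 * l - 1) * x ^ (-2 * l - 1 - 1)) x :=
      Real.hasDerivAt_rpow_const (Or.inl hx.ne')
    have : HasDerivAt (fun s : ℝ => s ^ (-2 * l - 1) * (τb ^ 2 + ‖μb‖ ^ 2) ^ (r - 1 / 2) *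
        (1 + ε * (τb ^ 2 + ‖μb‖ ^ 2)) ^ (-K / 2))
        ((-2 * l - 1) * x ^ (-2 * l - 1 - 1) * (τb ^ 2 + ‖μb‖ ^ 2) ^ (r - 1 / 2) *
          (1 + ε * (τb ^ 2 + ‖μb‖ ^ 2)) ^ (-K / 2)) x :=
      (hr.mul_const _).mul_const _
    rw [this.deriv]
    ring_nf
  have hA : HasDerivAt (fun t : ℝ => (t ^ 2 + ‖μb‖ ^ 2) ^ (r - 1 / 2))
      (2 * τb * (r - 1 / 2) * (τb ^ 2 + ‖μb‖ ^ 2) ^ (r - 1 / 2 - 1)) τb :=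
    hu.rpow_const (Or.inl hq.ne')
  have hB : HasDerivAt (fun t : ℝ => (1 + ε * (t ^ 2 + ‖μb‖ ^ 2)) ^ (-K / 2))
      (ε * (2 * τb) * (-K / 2) * (1 + ε * (τb ^ 2 + ‖μb‖ ^ 2)) ^ (-K / 2 - 1)) τb :=
    ((hu.const_mul ε).const_add 1).rpow_const (Or.inl h1.ne')
  have hd4 : deriv (fun t : ℝ => x ^ (-2 * l - 1) * (t ^ 2 + ‖μb‖ ^ 2) ^ (r - 1 / 2) *
        (1 + ε * (t ^ 2 + ‖μb‖ ^ 2)) ^ (-K / 2)) τb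
      = x ^ (-2 * l - 1) * ((r - 1 / 2) * (τb ^ 2 + ‖μb‖ ^ 2) ^ (r - 1 / 2 - 1) * (2 * τb)) *
          (1 + ε * (τb ^ 2 + ‖μb‖ ^ 2)) ^ (-K / 2)
        + x ^ (-2 * l - 1) * (τb ^ 2 + ‖μb‖ ^ 2) ^ (r - 1 / 2) *
          ((-K / 2) * (1 + ε * (τb ^ 2 + ‖μb‖ ^ 2)) ^ (-K / 2 - 1) * (ε * (2 * τb))) := by
    have : HasDerivAt (fun t : ℝ => x ^ (-2 * l - 1) * (t ^ 2 + ‖μb‖ ^ 2) ^ (r - 1 / 2) *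
        (1 + ε * (t ^ 2 + ‖μb‖ ^ 2)) ^ (-K / 2))
        ((x ^ (-2 * l - 1) * (2 * τb * (r - 1 / 2) * (τb ^ 2 + ‖μb‖ ^ 2) ^ (r - 1 / 2 - 1))) *
            ((1 + ε * (τb ^ 2 + ‖μb‖ ^ 2)) ^ (-K / 2))
          + (x ^ (-2 * l - 1) * (τb ^ 2 + ‖μb‖ ^ 2) ^ (r - 1 / 2)) *
            (ε * (2 * τb) * (-K / 2) * (1 + ε * (τb ^ 2 + ‖μb‖ ^ 2)) ^ (-K / 2 - 1))) τb :=
      (hA.const_mul (x ^ (-2 * l - 1))).mul hB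
    rw [this.deriv]; ring
  -- rewrite rpow atoms
  have e0 : x ^ (-2 * l) = x ^ (-2 * l - 2) * x * x := by
    rw [← Real.rpow_add_one hx.ne', ← Real.rpow_add_one hx.ne']
    congr 1; ring
  have e1 : x ^ (-2 * l - 1) = x ^ (-2 * l - 2) * x := by
    rw [← Real.rpow_add_one hx.ne']
    congr 1; ring
  have eq1 : (τb ^ 2 + ‖μb‖ ^ 2) ^ (r - 1 / 2)
      = (τb ^ 2 + ‖μb‖ ^ 2) ^ (r - 3 / 2) * (τb ^ 2 + ‖μb‖ ^ 2) := by
    rw [← Real.rpow_add_one hq.ne']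
    congr 1; ring
  have eq2 : (τb ^ 2 + ‖μb‖ ^ 2) ^ (r - 1 / 2 - 1) = (τb ^ 2 + ‖μb‖ ^ 2) ^ (r - 3 / 2) := by
    congr 1; ring
  have eC : (1 + ε * (τb ^ 2 + ‖μb‖ ^ 2)) ^ (-K / 2 - 1)
      = (1 + ε * (τb ^ 2 + ‖μb‖ ^ 2)) ^ (-K / 2) / (1 + ε * (τb ^ 2 + ‖μb‖ ^ 2)) :=
    Real.rpow_sub_one h1.ne' _
  simp only [bBracket]
  rw [hd1, hd2, hd3, hd4, e0, e1, eq1, eq2, eC]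
  field_simp
  ring
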